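/- Let ξ, η : ℝ → ℝ⁴ be differentiable, z₁(t) = (ξ(t), η(t)) ∈ ℝ⁸, and let M : ℝ → Matrix (Fin 4) (Fin 4) ℝ be differentiable with each M(t) symmetric and c_m‖x‖² ≤ xᵀM(t)x ≤ c_M‖x‖² for all x ∈ ℝ⁴ (0 < c_m ≤ c_M). Let C, B : ℝ → Matrix (Fin 4) (Fin 4) ℝ satisfy the skew-symmetry property η(t)ᵀ(½M'(t) − C(t))η(t) = 0 and the control-effectiveness bound xᵀB(t)x ≥ B̲‖x‖² for all x ∈ ℝ⁴, where B̲ ≥ 1/4. Let χ : ℝ → ℝ⁴ satisfy ‖χ(t)‖ ≤ ρ(‖z₁(t)‖) where ρ(s) = ρ₁ + ρ₂ s + ρ₃ s² with ρ₁, ρ₂, ρ₃ ≥ 0. Suppose for gains α, k₁, ε > 0 the closed-loop equations ξ'(t) = η(t) − α ξ(t) and M(t)η'(t) = χ(t) − C(t)η(t) − ξ(t) − B(t)(k₁ η(t) + (1/ε) ρ(‖z₁(t)‖)² η(t)) hold. Then V(t) = ½‖ξ(t)‖² + ½η(t)ᵀM(t)η(t) is differentiable and satisfies V'(t) ≤ −α‖ξ(t)‖²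 − B̲ k₁‖η(t)‖² + ε ≤ −δ V(t) + ε for all t, where δ = min(α, B̲ k₁)/b and b = max(1/2, c_M/2). -/

import Mathlib

open RealInnerProductSpace


/-- The quadratic form `xᵀ A x`. -/
noncomputable def quadForm (A : Matrix (Fin 4) (Fin 4) ℝ) (x : EuclideanSpace ℝ (Fin 4)) : ℝ :=
  ∑ i, ∑ j, x i * A i j * x j

/-- The action of a matrix on a vector of `EuclideanSpace ℝ (Fin 4)` (i.e. `A x`). -/
noncomputable def mulVecE (A : Matrix (Fin 4) (Fin 4) ℝ) (x : EuclideanSpace ℝ (Fin 4)) :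
    EuclideanSpace ℝ (Fin 4) :=
  (EuclideanSpace.equiv (Fin 4) ℝ).symm (A.mulVec ((EuclideanSpace.equiv (Fin 4) ℝ) x))

/-- The stacked vector `z = (x, y) ∈ ℝ⁸` with `‖z‖² = ‖x‖² + ‖y‖²`. -/
noncomputable def stack (x y : EuclideanSpace ℝ (Fin 4)) :
    WithLp 2 (EuclideanSpace ℝ (Fin 4) × EuclideanSpace ℝ (Fin 4)) :=
  (WithLp.equiv 2 _).symm (x, y)


lemma hasDerivAt_apply' (f : ℝ → EuclideanSpace ℝ (Fin 4)) (fd : EuclideanSpace ℝ (Fin 4)) (t : ℝ)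
    (h : HasDerivAt f fd t) (i : Fin 4) : HasDerivAt (fun s => f s i) (fd i) t := by
  have := (EuclideanSpace.proj i).hasFDerivAt.comp_hasDerivAt t h
  exact this

lemma inner_mulVecE (A : Matrix (Fin 4) (Fin 4) ℝ) (x y : EuclideanSpace ℝ (Fin 4)) :
    ⟪x, mulVecE A y⟫ = ∑ i, ∑ j, x i * A i j * y j := by
  simp only [mulVecE, PiLp.inner_apply, RCLike.inner_apply, conj_trivial]
  refine Finset.sum_congr rfl fun i _ => ?_
  have : ((EuclideanSpace.equiv (Fin 4) ℝ).symm (A.mulVec ((EuclideanSpace.equiv (Fin 4) ℝ) y))) i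
      = ∑ j, A i j * y j := by
    rfl
  rw [this, Finset.sum_mul]
  exact Finset.sum_congr rfl fun j _ => by ring

lemma quadForm_smul_sub (c : ℝ) (A B : Matrix (Fin 4) (Fin 4) ℝ) (x : EuclideanSpace ℝ (Fin 4)) :
    quadForm (c • A - B) x = c * quadForm A x - quadForm B x := by
  simp only [quadForm]
  rw [Finset.mul_sum, ← Finset.sum_sub_distrib]
  refine Finset.sum_congr rfl fun i _ => ?_
  rw [Finset.mul_sum, ← Finset.sum_sub_distrib]
  refine Finset.sum_congr rfl fun j _ => ?_
  simp [Matrix.sub_apply, Matrix.smul_apply]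
  ring

lemma hasDerivAt_quadForm (M Md : ℝ → Matrix (Fin 4) (Fin 4) ℝ)
    (η ηd : ℝ → EuclideanSpace ℝ (Fin 4))
    (hM : ∀ i j t, HasDerivAt (fun s => M s i j) (Md t i j) t)
    (hη : ∀ t, HasDerivAt η (ηd t) t) (t : ℝ) :
    HasDerivAt (fun s => quadForm (M s) (η s))
      (∑ i, ∑ j, (ηd t i * M t i j * η t j + η t i * Md t i j * η t j
        + η t i * M t i j * ηd t j)) t := by
  simp only [quadForm]
  apply HasDerivAt.fun_sum
  intro i _
  apply HasDerivAt.fun_sum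
  intro j _
  have hi := hasDerivAt_apply' η (ηd t) t (hη t) i
  have hj := hasDerivAt_apply' η (ηd t) t (hη t) j
  have := (hi.fun_mul (hM i j t)).fun_mul hj
  refine this.congr_deriv ?_
  ring

lemma sum_swap_symm (A : Matrix (Fin 4) (Fin 4) ℝ) (hA : A.IsSymm)
    (x y : EuclideanSpace ℝ (Fin 4)) :
    ∑ i, ∑ j, x i * A i j * y j = ∑ i, ∑ j, y i * A i j * x j := by
  rw [Finset.sum_comm]
  refine Finset.sum_congr rfl fun j _ => Finset.sum_congr rfl fun i _ => ?_
  rw [hA.apply i j]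
  ring

set_option maxHeartbeats 2000000 in
/-- the joint-layer Lyapunov function is differentiable and satisfies
`V'(t) ≤ −α‖ξ(t)‖² − B̲k₁‖η(t)‖² + ε ≤ −δ V(t) + ε`. -/
theorem stmt3
    (ξ η ξd ηd : ℝ → EuclideanSpace ℝ (Fin 4))
    (hξ : ∀ t, HasDerivAt ξ (ξd t) t) (hη : ∀ t, HasDerivAt η (ηd t) t)
    (z₁ : ℝ → WithLp 2 (EuclideanSpace ℝ (Fin 4) × EuclideanSpace ℝ (Fin 4)))
    (hz₁ : z₁ = fun t => stack (ξ t) (η t))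
    (c_m c_M : ℝ) (hcm : 0 < c_m) (hcmM : c_m ≤ c_M)
    (M Md : ℝ → Matrix (Fin 4) (Fin 4) ℝ)
    (hM : ∀ i j t, HasDerivAt (fun s => M s i j) (Md t i j) t)
    (hMsymm : ∀ t, (M t).IsSymm)
    (hMlow : ∀ t (x : EuclideanSpace ℝ (Fin 4)), c_m * ‖x‖ ^ 2 ≤ quadForm (M t) x)
    (hMhigh : ∀ t (x : EuclideanSpace ℝ (Fin 4)), quadForm (M t) x ≤ c_M * ‖x‖ ^ 2)
    (C B : ℝ → Matrix (Fin 4) (Fin 4) ℝ)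
    (hskew : ∀ t, quadForm ((1 / 2 : ℝ) • Md t - C t) (η t) = 0)
    (Blo : ℝ) (hBlo : (1 / 4 : ℝ) ≤ Blo)
    (hB : ∀ t (x : EuclideanSpace ℝ (Fin 4)), Blo * ‖x‖ ^ 2 ≤ quadForm (B t) x)
    (ρ₁ ρ₂ ρ₃ : ℝ) (hρ₁ : 0 ≤ ρ₁) (hρ₂ : 0 ≤ ρ₂) (hρ₃ : 0 ≤ ρ₃)
    (ρ : ℝ → ℝ) (hρ : ρ = fun s => ρ₁ + ρ₂ * s + ρ₃ * s ^ 2)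
    (χ : ℝ → EuclideanSpace ℝ (Fin 4)) (hχ : ∀ t, ‖χ t‖ ≤ ρ ‖z₁ t‖)
    (α k₁ ε : ℝ) (hα : 0 < α) (hk₁ : 0 < k₁) (hε : 0 < ε)
    (hloop₁ : ∀ t, ξd t = η t - α • ξ t)
    (hloop₂ : ∀ t, mulVecE (M t) (ηd t)
      = χ t - mulVecE (C t) (η t) - ξ t
        - mulVecE (B t) (k₁ • η t + ((1 / ε) * (ρ ‖z₁ t‖) ^ 2) • η t))
    (V : ℝ → ℝ)
    (hV : V = fun t => (1 / 2) * ‖ξ t‖ ^ 2 + (1 / 2) * quadForm (M t) (η t))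
    (b δ : ℝ) (hb : b = max (1 / 2) (c_M / 2)) (hδ : δ = min α (Blo * k₁) / b) :
    ∀ t, DifferentiableAt ℝ V t ∧
      deriv V t ≤ -α * ‖ξ t‖ ^ 2 - Blo * k₁ * ‖η t‖ ^ 2 + ε ∧
      -α * ‖ξ t‖ ^ 2 - Blo * k₁ * ‖η t‖ ^ 2 + ε ≤ -δ * V t + ε := by
  intro t
  set ρz : ℝ := ρ ‖z₁ t‖ with hρzdef
  have hz0 : (0:ℝ) ≤ ‖z₁ t‖ := norm_nonneg _
  have hρz : 0 ≤ ρz := by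
    rw [hρzdef, hρ]
    dsimp only
    nlinarith [mul_nonneg hρ₂ hz0, mul_nonneg hρ₃ (sq_nonneg ‖z₁ t‖)]
  -- derivative of V
  have hD : HasDerivAt V
      (⟪ξ t, ξd t⟫ + ((1/2) * quadForm (Md t) (η t) + ⟪η t, mulVecE (M t) (ηd t)⟫)) t := by
    rw [hV]
    have h1 : HasDerivAt (fun s => (1/2 : ℝ) * ‖ξ s‖^2) ⟪ξ t, ξd t⟫ t := by
      have hin : HasDerivAt (fun s => ⟪ξ s, ξ s⟫) (⟪ξ t, ξd t⟫ + ⟪ξd t, ξ t⟫) t :=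
        (hξ t).inner ℝ (hξ t)
      have h2 := hin.const_mul (1/2 : ℝ)
      have hfun : (fun s => (1/2:ℝ) * ‖ξ s‖^2) = fun s => (1/2:ℝ) * ⟪ξ s, ξ s⟫ := by
        funext s; rw [real_inner_self_eq_norm_sq]
      rw [hfun]
      refine h2.congr_deriv ?_
      rw [real_inner_comm (ξd t) (ξ t)]; ring
    have h2 : HasDerivAt (fun s => (1/2:ℝ) * quadForm (M s) (η s))
        ((1/2) * quadForm (Md t) (η t) + ⟪η t, mulVecE (M t) (ηd t)⟫) t := by
      have h3 := (hasDerivAt_quadForm M Md η ηd hM hη t).const_mul (1/2:ℝ)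
      refine h3.congr_deriv ?_
      have split : (∑ i, ∑ j, (ηd t i * M t i j * η t j + η t i * Md t i j * η t j
            + η t i * M t i j * ηd t j))
          = (∑ i, ∑ j, ηd t i * M t i j * η t j)
            + (∑ i, ∑ j, η t i * Md t i j * η t j)
            + (∑ i, ∑ j, η t i * M t i j * ηd t j) := by
        simp [Finset.sum_add_distrib]
      have e1 : (∑ i, ∑ j, ηd t i * M t i j * η t j)
          = ⟪η t, mulVecE (M t) (ηd t)⟫ := by
        rw [inner_mulVecE]
        exact sum_swap_symm (M t) (hMsymm t) (ηd t) (η t)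
      have e2 : (∑ i, ∑ j, η t i * M t i j * ηd t j)
          = ⟪η t, mulVecE (M t) (ηd t)⟫ := (inner_mulVecE _ _ _).symm
      have e3 : (∑ i, ∑ j, η t i * Md t i j * η t j) = quadForm (Md t) (η t) := rfl
      rw [split, e1, e2, e3]; ring
    exact h1.add h2
  have hdiff : DifferentiableAt ℝ V t := hD.differentiableAt
  have hderiv := hD.deriv
  -- substitutions
  have e1 : ⟪ξ t, ξd t⟫ = ⟪ξ t, η t⟫ - α * ‖ξ t‖^2 := by
    rw [hloop₁ t, inner_sub_right, real_inner_smul_right, real_inner_self_eq_norm_sq]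
  have eC : ⟪η t, mulVecE (C t) (η t)⟫ = quadForm (C t) (η t) := by
    rw [inner_mulVecE]; rfl
  have eB : ⟪η t, mulVecE (B t) (k₁ • η t + ((1/ε) * ρz^2) • η t)⟫
      = (k₁ + (1/ε)*ρz^2) * quadForm (B t) (η t) := by
    rw [inner_mulVecE]
    simp only [quadForm, PiLp.add_apply, PiLp.smul_apply, smul_eq_mul]
    rw [Finset.mul_sum]
    refine Finset.sum_congr rfl fun i _ => ?_
    rw [Finset.mul_sum]
    exact Finset.sum_congr rfl fun j _ => by ring
  have e2 : ⟪η t, mulVecE (M t) (ηd t)⟫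
      = ⟪η t, χ t⟫ - quadForm (C t) (η t) - ⟪η t, ξ t⟫
        - (k₁ + (1/ε)*ρz^2) * quadForm (B t) (η t) := by
    rw [hloop₂ t, inner_sub_right, inner_sub_right, inner_sub_right, eC, ← hρzdef, eB]
  have e3 : (1/2 : ℝ) * quadForm (Md t) (η t) = quadForm (C t) (η t) := by
    have h := hskew t
    rw [quadForm_smul_sub] at h
    linarith
  have e4 : ⟪η t, χ t⟫ ≤ ‖η t‖ * ρz :=
    le_trans (real_inner_le_norm _ _) (mul_le_mul_of_nonneg_left (hχ t) (norm_nonneg _))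
  have e5 := hB t (η t)
  have hc : (0:ℝ) ≤ (1/ε) * ρz^2 := mul_nonneg (one_div_nonneg.mpr hε.le) (sq_nonneg _)
  have key : ‖η t‖ * ρz ≤ ε + (1/ε) * ρz^2 * (Blo * ‖η t‖^2) := by
    have hA : (1/ε) * ρz^2 * (Blo * ‖η t‖^2) = (ρz^2 * Blo * ‖η t‖^2) / ε := by ring
    rw [hA, ← sub_le_iff_le_add', le_div_iff₀ hε]
    nlinarith [sq_nonneg (2*Blo*(ρz*‖η t‖) - ε), hBlo, hε, sq_nonneg ε]
  have hk : k₁ * (Blo * ‖η t‖^2) ≤ k₁ * quadForm (B t) (η t) :=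
    mul_le_mul_of_nonneg_left e5 hk₁.le
  have hc2 : (1/ε)*ρz^2 * (Blo * ‖η t‖^2) ≤ (1/ε)*ρz^2 * quadForm (B t) (η t) :=
    mul_le_mul_of_nonneg_left e5 hc
  have hcomm : ⟪ξ t, η t⟫ = ⟪η t, ξ t⟫ := real_inner_comm _ _
  have expand : (k₁ + (1/ε)*ρz^2) * quadForm (B t) (η t)
      = k₁ * quadForm (B t) (η t) + (1/ε)*ρz^2 * quadForm (B t) (η t) := by ring
  refine ⟨hdiff, ?_, ?_⟩
  · rw [hderiv, e1, e2, e3, hcomm, expand]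
    linarith only [e4, key, hk, hc2]
  · -- second inequality
    have hb' : (0:ℝ) < b := by
      rw [hb]; exact lt_of_lt_of_le (by norm_num) (le_max_left _ _)
    have hδ0 : 0 ≤ δ := by
      rw [hδ]
      exact div_nonneg (le_min hα.le (mul_nonneg (by linarith) hk₁.le)) hb'.le
    have hδb : δ * b = min α (Blo * k₁) := by
      rw [hδ, div_mul_cancel₀ _ hb'.ne']
    have hVle : V t ≤ b * ‖ξ t‖^2 + b * ‖η t‖^2 := by
      rw [hV]
      dsimp only
      have h1 : (1/2 : ℝ) ≤ b := hb ▸ le_max_left _ _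
      have h2 : c_M/2 ≤ b := hb ▸ le_max_right _ _
      have h3 := hMhigh t (η t)
      have p1 := mul_le_mul_of_nonneg_right h1 (sq_nonneg ‖ξ t‖)
      have p2 := mul_le_mul_of_nonneg_right h2 (sq_nonneg ‖η t‖)
      linarith only [h3, p1, p2]
    have step : δ * (b * ‖ξ t‖^2 + b * ‖η t‖^2)
        = min α (Blo*k₁) * ‖ξ t‖^2 + min α (Blo*k₁) * ‖η t‖^2 := by
      rw [mul_add, ← mul_assoc, ← mul_assoc, hδb]
    have s1 : δ * V t ≤ min α (Blo*k₁) * ‖ξ t‖^2 + min α (Blo*k₁) * ‖η t‖^2 :=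
      step ▸ mul_le_mul_of_nonneg_left hVle hδ0
    have m1 := mul_le_mul_of_nonneg_right (min_le_left α (Blo*k₁)) (sq_nonneg ‖ξ t‖)
    have m2 := mul_le_mul_of_nonneg_right (min_le_right α (Blo*k₁)) (sq_nonneg ‖η t‖)
    linarith only [s1, m1, m2]
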